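/- Let Γ ⊆ ℤ^n be a wt-prebrick and let A ⊆ Γ. Then the following are equivalent: (1) the images in C(Γ) of the monomials x^γ for γ ∈ A form a ℂ-basis of a ℂ[x_1, …, x_n]-submodule of C(Γ); (2) for every γ ∈ A and every i ∈ {1, …, n}, if γ + e_i ∈ Γ then γ + e_i ∈ A. -/

import Mathlib

open scoped BigOperators

noncomputable section

/-- A weight map `ℤⁿ → ℤ/sℤ`, `m ↦ ∑ j, b j * m j mod s`. -/
def wmap (n s : ℕ) (b : Fin n → ℤ) (m : Fin n → ℤ) : ZMod s :=
  ((∑ j, b j * m j : ℤ) : ZMod s)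

/-- Coercion of a vector of naturals to a vector of integers. -/
def natVec {n : ℕ} (p : Fin n → ℕ) : Fin n → ℤ := fun j => (p j : ℤ)

/-- A `w`-prebrick for the weight map `wmap n s b`. -/
def IsPrebrick (n s : ℕ) (b : Fin n → ℤ) (Γ : Set (Fin n → ℤ)) : Prop :=
  (0 : Fin n → ℤ) ∈ Γ ∧
  Set.BijOn (wmap n s b) Γ Set.univ ∧
  (∀ γ ∈ Γ, ∀ p q : Fin n → ℕ,
    γ + natVec p + natVec q ∈ Γ → γ + natVec p ∈ Γ) ∧
  (∀ γ ∈ Γ, ∃ (N : ℕ) (c : ℕ → Fin n → ℤ), c 0 = γ ∧ c N = 0 ∧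
    (∀ t ≤ N, c t ∈ Γ) ∧
    (∀ t < N, ∃ i : Fin n,
      c (t + 1) = c t + Pi.single i 1 ∨ c (t + 1) = c t - Pi.single i 1))

/-- The Laurent polynomial ring `ℂ[x₁^{±1}, …, xₙ^{±1}]`. -/
abbrev LaurRing (n : ℕ) : Type := AddMonoidAlgebra ℂ (Fin n → ℤ)

/-- The polynomial ring `ℂ[x₁, …, xₙ]`. -/
abbrev PolyRing (n : ℕ) : Type := AddMonoidAlgebra ℂ (Fin n → ℕ)

/-- The inclusion `ℕⁿ →+ ℤⁿ`. -/
def natCoeHom (n : ℕ) : (Fin n → ℕ) →+ (Fin n → ℤ) where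
  toFun p := fun j => (p j : ℤ)
  map_zero' := by funext j; simp
  map_add' p q := by funext j; push_cast; rfl

/-- `ℂ[x₁^{±1}, …, xₙ^{±1}]` as an algebra (hence a module) over `ℂ[x₁, …, xₙ]`. -/
instance polyAlgLaur (n : ℕ) : Algebra (PolyRing n) (LaurRing n) :=
  (AddMonoidAlgebra.mapDomainRingHom ℂ (natCoeHom n)).toAlgebra

/-- `⟨A⟩`: the `ℂ[x₁,…,xₙ]`-submodule of the Laurent polynomial ring generated by the
monomials `x^γ`, `γ ∈ A`. -/
def genMod (n : ℕ) (A : Set (Fin n → ℤ)) : Submodule (PolyRing n) (LaurRing n) :=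
  Submodule.span (PolyRing n) ((fun γ => AddMonoidAlgebra.single γ (1 : ℂ)) '' A)

/-- The border bases `B(Γ) = {γ + e_i : γ ∈ Γ, i} ∖ Γ`. -/
def border (n : ℕ) (Γ : Set (Fin n → ℤ)) : Set (Fin n → ℤ) :=
  {m | (∃ γ ∈ Γ, ∃ i : Fin n, m = γ + Pi.single i 1) ∧ m ∉ Γ}

/-- `C(Γ) := ⟨Γ⟩ / ⟨B(Γ)⟩`, a module over `ℂ[x₁, …, xₙ]`. -/
abbrev CGamma (n : ℕ) (Γ : Set (Fin n → ℤ)) : Type :=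
  ↥(genMod n Γ) ⧸ (genMod n (border n Γ)).comap (genMod n Γ).subtype

/-- `C(Γ)` as a `ℂ`-module (restriction of scalars along `ℂ → ℂ[x₁, …, xₙ]`). -/
instance cGammaModC (n : ℕ) (Γ : Set (Fin n → ℤ)) : Module ℂ (CGamma n Γ) :=
  Module.compHom _ (algebraMap ℂ (PolyRing n))

/-- The image in `C(Γ)` of the monomial `x^γ` for `γ ∈ Γ`. -/
def cls (n : ℕ) (Γ : Set (Fin n → ℤ)) (γ : Fin n → ℤ) (hγ : γ ∈ Γ) : CGamma n Γ :=
  Submodule.Quotient.mk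
    ⟨AddMonoidAlgebra.single γ (1 : ℂ), Submodule.subset_span ⟨γ, hγ, rfl⟩⟩


-- ===== auxiliary lemmas =====

lemma smul_eq_mapDomain (n : ℕ) (a : PolyRing n) (f : LaurRing n) :
    a • f = AddMonoidAlgebra.mapDomainRingHom ℂ (natCoeHom n) a * f := rfl

lemma single_smul_single (n : ℕ) (p : Fin n → ℕ) (γ : Fin n → ℤ) (c d : ℂ) :
    (AddMonoidAlgebra.single p c) • (AddMonoidAlgebra.single γ d : LaurRing n)
      = AddMonoidAlgebra.single (γ + natVec p) (c * d) := by
  rw [smul_eq_mapDomain]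
  rw [show (AddMonoidAlgebra.mapDomainRingHom ℂ (natCoeHom n) (AddMonoidAlgebra.single p c) :
      LaurRing n) = AddMonoidAlgebra.single (natVec p) c from AddMonoidAlgebra.mapDomain_single]
  rw [AddMonoidAlgebra.single_mul_single, add_comm]

lemma algebraMap_c (n : ℕ) (c : ℂ) :
    algebraMap ℂ (PolyRing n) c = AddMonoidAlgebra.single 0 c := rfl

lemma csmul_laur (n : ℕ) (c : ℂ) (f : LaurRing n) :
    (algebraMap ℂ (PolyRing n) c) • f = c • f := by
  rw [algebraMap_c, smul_eq_mapDomain]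
  rw [show (AddMonoidAlgebra.mapDomainRingHom ℂ (natCoeHom n)
      (AddMonoidAlgebra.single (0 : Fin n → ℕ) c) : LaurRing n)
      = AddMonoidAlgebra.single 0 c from by
    rw [show (AddMonoidAlgebra.mapDomainRingHom ℂ (natCoeHom n)
        (AddMonoidAlgebra.single (0:Fin n → ℕ) c) : LaurRing n)
        = AddMonoidAlgebra.single ((natCoeHom n) 0) c from AddMonoidAlgebra.mapDomain_single, map_zero]]
  exact (Algebra.smul_def c f).symm

/-- `S + ℕⁿ` -/
def plusNat (n : ℕ) (S : Set (Fin n → ℤ)) : Set (Fin n → ℤ) :=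
  {m | ∃ s ∈ S, ∃ p : Fin n → ℕ, m = s + natVec p}

lemma natVec_add {n : ℕ} (p q : Fin n → ℕ) : natVec (p + q) = natVec p + natVec q := by
  funext j; simp [natVec]

lemma natVec_zero {n : ℕ} : natVec (0 : Fin n → ℕ) = 0 := funext fun j => by simp [natVec]

lemma support_genMod {n : ℕ} {S : Set (Fin n → ℤ)} {f : LaurRing n}
    (hf : f ∈ genMod n S) : ∀ m, f.coeff m ≠ 0 → m ∈ plusNat n S := by
  induction hf using Submodule.span_induction with
  | mem x hx =>
    obtain ⟨s, hs, rfl⟩ := hx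
    intro m hm
    have : m = s := by
      by_contra h
      exact hm (Finsupp.single_eq_of_ne' (Ne.symm h))
    exact ⟨s, hs, 0, by subst this; rw [natVec_zero, add_zero]⟩
  | zero => intro m hm; simp at hm
  | add x y _ _ hx hy =>
    intro m hm
    have : x.coeff m ≠ 0 ∨ y.coeff m ≠ 0 := by
      by_contra h
      push_neg at h
      exact hm (by show x.coeff m + y.coeff m = 0; rw [h.1, h.2, add_zero])
    rcases this with h | h
    · exact hx m h
    · exact hy m h
  | smul a x hx hax =>
    intro m hm
    rw [smul_eq_mapDomain] at hm
    classical
    have hsup : m ∈ (AddMonoidAlgebra.mapDomainRingHom ℂ (natCoeHom n) a * x).coeff.support :=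
      Finsupp.mem_support_iff.mpr hm
    have := AddMonoidAlgebra.support_coeff_mul_subset _ _ hsup
    rw [Finset.mem_add] at this
    obtain ⟨u, hu, v, hv, rfl⟩ := this
    have hu' : u ∈ Finset.image (natCoeHom n) a.coeff.support := Finsupp.mapDomain_support hu
    obtain ⟨q, _, rfl⟩ := Finset.mem_image.mp hu'
    obtain ⟨s, hs, p, rfl⟩ := hax v (Finsupp.mem_support_iff.mp hv)
    exact ⟨s, hs, p + q, by
      rw [natVec_add]
      show (natCoeHom n) q + (s + natVec p) = _
      show natVec q + _ = _
      ring⟩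

lemma natVec_single {n : ℕ} (i : Fin n) : natVec (Pi.single i 1) = Pi.single i 1 := by
  funext j
  rcases eq_or_ne j i with rfl | h
  · simp [natVec]
  · simp [natVec, Pi.single_apply, h]

section pre
variable {n : ℕ} {Γ : Set (Fin n → ℤ)}

lemma plusNat_border_disj
    (hdown : ∀ γ ∈ Γ, ∀ p q : Fin n → ℕ, γ + natVec p + natVec q ∈ Γ → γ + natVec p ∈ Γ)
    (m : Fin n → ℤ) (hm : m ∈ plusNat n (border n Γ)) : m ∉ Γ := by
  obtain ⟨s, ⟨⟨γ, hγ, i, rfl⟩, hout⟩, p, rfl⟩ := hm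
  intro hmem
  refine hout ?_
  have := hdown γ hγ (Pi.single i 1) p ?_
  · rwa [natVec_single] at this
  · rwa [natVec_single]

lemma mem_or_borderPlus
    (hdown : ∀ γ ∈ Γ, ∀ p q : Fin n → ℕ, γ + natVec p + natVec q ∈ Γ → γ + natVec p ∈ Γ)
    (p : Fin n → ℕ) (γ : Fin n → ℤ) (hγ : γ ∈ Γ) :
    γ + natVec p ∈ Γ ∨ γ + natVec p ∈ plusNat n (border n Γ) := by
  suffices h : ∀ k (p : Fin n → ℕ), (∑ j, p j) = k →
      (γ + natVec p ∈ Γ ∨ γ + natVec p ∈ plusNat n (border n Γ)) from h _ p rfl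
  intro k
  induction k using Nat.strong_induction_on with
  | _ k ih =>
  intro p hk
  by_cases hin : γ + natVec p ∈ Γ
  · exact Or.inl hin
  right
  have hp0 : p ≠ 0 := by
    rintro rfl
    exact hin (by rw [natVec_zero, add_zero]; exact hγ)
  obtain ⟨i, hi⟩ : ∃ i, p i ≠ 0 := by
    by_contra h; push_neg at h; exact hp0 (funext h)
  set q : Fin n → ℕ := p - Pi.single i 1 with hq
  have hpq : p = q + Pi.single i 1 := by
    funext j
    rcases eq_or_ne j i with rfl | h
    · simp [hq, Pi.single_apply]; omega
    · simp [hq, Pi.single_apply, h]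
  have hsum : (∑ j, q j) < k := by
    have h1 : (∑ j, p j) = (∑ j, q j) + 1 := by
      have hj : ∀ j, p j = q j + (Pi.single i 1 : Fin n → ℕ) j := fun j => by rw [hpq]; rfl
      calc ∑ j, p j = ∑ j, (q j + (Pi.single i 1 : Fin n → ℕ) j) :=
            Finset.sum_congr rfl (fun j _ => hj j)
        _ = (∑ j, q j) + ∑ j, (Pi.single i 1 : Fin n → ℕ) j := Finset.sum_add_distrib
        _ = (∑ j, q j) + 1 := by congr 1; simp [Pi.single_apply]
    omega
  have hvec : natVec p = natVec q + Pi.single i 1 := by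
    rw [hpq, natVec_add, natVec_single]
  rcases ih _ hsum q rfl with h | h
  · refine ⟨γ + natVec q + Pi.single i 1, ⟨⟨γ + natVec q, h, i, rfl⟩, ?_⟩, 0, ?_⟩
    · rw [hvec, ← add_assoc] at hin; exact hin
    · rw [hvec, ← add_assoc, natVec_zero, add_zero]
  · obtain ⟨s, hs, u, heq⟩ := h
    exact ⟨s, hs, u + Pi.single i 1, by
      rw [hvec, ← add_assoc, heq, natVec_add, natVec_single, add_assoc]⟩

lemma closure_mem {A : Set (Fin n → ℤ)} (hA : A ⊆ Γ)
    (hcl : ∀ γ ∈ A, ∀ i : Fin n, γ + Pi.single i 1 ∈ Γ → γ + Pi.single i 1 ∈ A)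
    (hdown : ∀ γ ∈ Γ, ∀ p q : Fin n → ℕ, γ + natVec p + natVec q ∈ Γ → γ + natVec p ∈ Γ)
    (p : Fin n → ℕ) (a : Fin n → ℤ) (ha : a ∈ A) (hin : a + natVec p ∈ Γ) :
    a + natVec p ∈ A := by
  suffices h : ∀ k (p : Fin n → ℕ), (∑ j, p j) = k → a + natVec p ∈ Γ → a + natVec p ∈ A from
    h _ p rfl hin
  intro k
  induction k using Nat.strong_induction_on with
  | _ k ih =>
  intro p hk hin
  by_cases hp0 : p = 0
  · subst hp0; rw [natVec_zero, add_zero]; exact ha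
  obtain ⟨i, hi⟩ : ∃ i, p i ≠ 0 := by
    by_contra h; push_neg at h; exact hp0 (funext h)
  set q : Fin n → ℕ := p - Pi.single i 1 with hq
  have hpq : p = q + Pi.single i 1 := by
    funext j
    rcases eq_or_ne j i with rfl | h
    · simp [hq, Pi.single_apply]; omega
    · simp [hq, Pi.single_apply, h]
  have hsum : (∑ j, q j) < k := by
    have h1 : (∑ j, p j) = (∑ j, q j) + 1 := by
      have hj : ∀ j, p j = q j + (Pi.single i 1 : Fin n → ℕ) j := fun j => by rw [hpq]; rfl
      calc ∑ j, p j = ∑ j, (q j + (Pi.single i 1 : Fin n → ℕ) j) :=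
            Finset.sum_congr rfl (fun j _ => hj j)
        _ = (∑ j, q j) + ∑ j, (Pi.single i 1 : Fin n → ℕ) j := Finset.sum_add_distrib
        _ = (∑ j, q j) + 1 := by congr 1; simp [Pi.single_apply]
    omega
  have hvec : natVec p = natVec q + Pi.single i 1 := by
    rw [hpq, natVec_add, natVec_single]
  have hqin : a + natVec q ∈ Γ := by
    refine hdown a (hA ha) q (Pi.single i 1) ?_
    rw [natVec_single, add_assoc, ← hvec]; exact hin
  have hqA : a + natVec q ∈ A := ih _ hsum q rfl hqin
  have := hcl _ hqA i (by rw [add_assoc, ← hvec]; exact hin)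
  rwa [hvec, ← add_assoc]

end pre


set_option synthInstance.maxHeartbeats 1000000
set_option maxHeartbeats 1000000

section cg
variable {n : ℕ} {Γ : Set (Fin n → ℤ)}

lemma single_mem_genMod {S : Set (Fin n → ℤ)} {m : Fin n → ℤ} (hm : m ∈ plusNat n S) (c : ℂ) :
    AddMonoidAlgebra.single m c ∈ genMod n S := by
  obtain ⟨s, hs, p, rfl⟩ := hm
  have : AddMonoidAlgebra.single (s + natVec p) c
      = (AddMonoidAlgebra.single p c : PolyRing n) • (AddMonoidAlgebra.single s (1:ℂ) : LaurRing n) := by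
    rw [single_smul_single, mul_one]
  rw [this]
  exact Submodule.smul_mem _ _ (Submodule.subset_span ⟨s, hs, rfl⟩)

instance cgTower : IsScalarTower ℂ (PolyRing n) (CGamma n Γ) :=
  ⟨fun c f v => by
    show ((c • f) • v) = algebraMap ℂ (PolyRing n) c • (f • v)
    rw [Algebra.smul_def, mul_smul]⟩

lemma csmul_cgamma (c : ℂ) (v : CGamma n Γ) :
    c • v = (algebraMap ℂ (PolyRing n) c) • v := rfl

/-- the basis vector in the big submodule -/
def el (γ : Fin n → ℤ) (hγ : γ ∈ Γ) : ↥(genMod n Γ) :=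
  ⟨AddMonoidAlgebra.single γ (1 : ℂ), Submodule.subset_span ⟨γ, hγ, rfl⟩⟩

lemma cls_eq_mk (γ : Fin n → ℤ) (hγ : γ ∈ Γ) :
    cls n Γ γ hγ = Submodule.Quotient.mk (el γ hγ) := rfl

lemma single_smul_cls (p : Fin n → ℕ) (γ : Fin n → ℤ) (hγ : γ ∈ Γ)
    (h : γ + natVec p ∈ Γ) :
    (AddMonoidAlgebra.single p (1:ℂ) : PolyRing n) • cls n Γ γ hγ
      = cls n Γ (γ + natVec p) h := by
  rw [cls_eq_mk, cls_eq_mk, ← Submodule.Quotient.mk_smul]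
  congr 1
  apply Subtype.ext
  show (AddMonoidAlgebra.single p (1:ℂ) : PolyRing n) • (AddMonoidAlgebra.single γ (1:ℂ) : LaurRing n)
      = AddMonoidAlgebra.single (γ + natVec p) (1:ℂ)
  rw [single_smul_single, mul_one]

lemma single_smul_cls_zero
    (hdown : ∀ γ ∈ Γ, ∀ p q : Fin n → ℕ, γ + natVec p + natVec q ∈ Γ → γ + natVec p ∈ Γ)
    (p : Fin n → ℕ) (γ : Fin n → ℤ) (hγ : γ ∈ Γ) (h : γ + natVec p ∉ Γ) :
    (AddMonoidAlgebra.single p (1:ℂ) : PolyRing n) • cls n Γ γ hγ = 0 := by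
  rw [cls_eq_mk, ← Submodule.Quotient.mk_smul, Submodule.Quotient.mk_eq_zero]
  rw [Submodule.mem_comap]
  show (AddMonoidAlgebra.single p (1:ℂ) : PolyRing n) • (AddMonoidAlgebra.single γ (1:ℂ) : LaurRing n)
      ∈ genMod n (border n Γ)
  rw [single_smul_single, mul_one]
  rcases mem_or_borderPlus hdown p γ hγ with h' | h'
  · exact absurd h' h
  · exact single_mem_genMod h' 1

lemma cls_linearIndependent
    (hdown : ∀ γ ∈ Γ, ∀ p q : Fin n → ℕ, γ + natVec p + natVec q ∈ Γ → γ + natVec p ∈ Γ) :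
    LinearIndependent ℂ (fun γ : Γ => cls n Γ γ.1 γ.2) := by
  classical
  rw [linearIndependent_iff']
  intro s g hsum i hi
  by_contra hne
  set N := (genMod n (border n Γ)).comap (genMod n Γ).subtype with hN
  have hrep : (∑ γ ∈ s, g γ • cls n Γ γ.1 γ.2)
      = Submodule.Quotient.mk (∑ γ ∈ s, (algebraMap ℂ (PolyRing n) (g γ)) • el γ.1 γ.2) := by
    show _ = N.mkQ _
    rw [map_sum]
    refine Finset.sum_congr rfl fun γ _ => ?_
    rw [Submodule.mkQ_apply, csmul_cgamma, cls_eq_mk, ← Submodule.Quotient.mk_smul]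
  rw [hrep, Submodule.Quotient.mk_eq_zero, Submodule.mem_comap] at hsum
  have hval : ((genMod n Γ).subtype (∑ γ ∈ s, (algebraMap ℂ (PolyRing n) (g γ)) • el γ.1 γ.2))
      = ∑ γ ∈ s, AddMonoidAlgebra.single (γ.1 : Fin n → ℤ) (g γ) := by
    rw [map_sum]
    refine Finset.sum_congr rfl fun γ _ => ?_
    show (algebraMap ℂ (PolyRing n) (g γ)) • (AddMonoidAlgebra.single (γ.1 : Fin n → ℤ) (1:ℂ) : LaurRing n)
        = _
    rw [csmul_laur, AddMonoidAlgebra.smul_single', mul_one]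
  rw [hval] at hsum
  have happ : (∑ γ ∈ s, (AddMonoidAlgebra.single (γ.1 : Fin n → ℤ) (g γ) : LaurRing n)).coeff i.1 = g i := by
    rw [AddMonoidAlgebra.coeff_sum, Finsupp.finset_sum_apply]
    rw [Finset.sum_eq_single i]
    · exact Finsupp.single_eq_same
    · intro b _ hbi
      exact Finsupp.single_eq_of_ne' (fun hh => hbi (Subtype.ext hh))
    · intro h; exact absurd hi h
  have := support_genMod hsum i.1 (by rw [happ]; exact hne)
  exact plusNat_border_disj hdown i.1 this i.2

end cg


instance cgComm {n : ℕ} {Γ : Set (Fin n → ℤ)} : SMulCommClass ℂ (PolyRing n) (CGamma n Γ) :=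
  ⟨fun c f v => by
    rw [csmul_cgamma, ← mul_smul, mul_comm, mul_smul, ← csmul_cgamma, smul_comm]⟩

section main
variable {n : ℕ} {Γ : Set (Fin n → ℤ)} {A : Set (Fin n → ℤ)}

lemma poly_smul_cls_mem
    (hdown : ∀ γ ∈ Γ, ∀ p q : Fin n → ℕ, γ + natVec p + natVec q ∈ Γ → γ + natVec p ∈ Γ)
    (hA : A ⊆ Γ)
    (hcl : ∀ γ ∈ A, ∀ i : Fin n, γ + Pi.single i 1 ∈ Γ → γ + Pi.single i 1 ∈ A)
    (f : PolyRing n) (a : Fin n → ℤ) (ha : a ∈ A) :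
    f • cls n Γ a (hA ha) ∈
      Submodule.span ℂ (Set.range fun γ : A => cls n Γ γ.1 (hA γ.2)) := by
  induction f using AddMonoidAlgebra.induction_on with
  | of g =>
    have hof : (AddMonoidAlgebra.of ℂ (Fin n → ℕ) (Multiplicative.ofAdd g))
        = AddMonoidAlgebra.single g (1:ℂ) := rfl
    rw [hof]
    rcases mem_or_borderPlus hdown g a (hA ha) with h | h
    · rw [single_smul_cls g a (hA ha) h]
      have hmemA : a + natVec g ∈ A := closure_mem hA hcl hdown g a ha h
      exact Submodule.subset_span ⟨⟨a + natVec g, hmemA⟩, rfl⟩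
    · rw [single_smul_cls_zero hdown g a (hA ha)
        (plusNat_border_disj hdown _ h)]
      exact Submodule.zero_mem _
  | add f g hf hg =>
    rw [add_smul]
    exact Submodule.add_mem _ hf hg
  | smul r f hf =>
    rw [smul_assoc]
    exact Submodule.smul_mem _ _ hf

lemma poly_smul_span_mem
    (hdown : ∀ γ ∈ Γ, ∀ p q : Fin n → ℕ, γ + natVec p + natVec q ∈ Γ → γ + natVec p ∈ Γ)
    (hA : A ⊆ Γ)
    (hcl : ∀ γ ∈ A, ∀ i : Fin n, γ + Pi.single i 1 ∈ Γ → γ + Pi.single i 1 ∈ A)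
    (f : PolyRing n) {y : CGamma n Γ}
    (hy : y ∈ Submodule.span ℂ (Set.range fun γ : A => cls n Γ γ.1 (hA γ.2))) :
    f • y ∈ Submodule.span ℂ (Set.range fun γ : A => cls n Γ γ.1 (hA γ.2)) := by
  induction hy using Submodule.span_induction with
  | mem x hx =>
    obtain ⟨a, rfl⟩ := hx
    exact poly_smul_cls_mem hdown hA hcl f a.1 a.2
  | zero => rw [smul_zero]; exact Submodule.zero_mem _
  | add x y _ _ hx hy => rw [smul_add]; exact Submodule.add_mem _ hx hy
  | smul c x _ hx =>
    rw [smul_comm]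
    exact Submodule.smul_mem _ _ hx

end main

theorem stmt_9 (n r : ℕ) (hn : 1 ≤ n) (hr : 1 ≤ r) (α : Fin n → ℤ)
    (Γ : Set (Fin n → ℤ)) (hΓ : IsPrebrick n r α Γ)
    (A : Set (Fin n → ℤ)) (hA : A ⊆ Γ) :
    (∃ W : Submodule (PolyRing n) (CGamma n Γ),
        LinearIndependent ℂ (fun γ : A => cls n Γ γ.1 (hA γ.2)) ∧
        (W : Set (CGamma n Γ)) =
          (Submodule.span ℂ (Set.range fun γ : A => cls n Γ γ.1 (hA γ.2)) :
            Set (CGamma n Γ)))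
    ↔ (∀ γ ∈ A, ∀ i : Fin n, γ + Pi.single i 1 ∈ Γ → γ + Pi.single i 1 ∈ A) := by
  have hdown := hΓ.2.2.1
  constructor
  · rintro ⟨W, hLI, hW⟩ γ hγA i hstep
    by_contra hnA
    have h2 : γ + natVec (Pi.single i 1) ∈ Γ := by rw [natVec_single]; exact hstep
    have hmem0 : cls n Γ γ (hA hγA) ∈ W := by
      have : cls n Γ γ (hA hγA) ∈ (W : Set (CGamma n Γ)) := by
        rw [hW]
        exact SetLike.mem_coe.mpr (Submodule.subset_span ⟨⟨γ, hγA⟩, rfl⟩)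
      exact this
    have hsm : (AddMonoidAlgebra.single (Pi.single i 1 : Fin n → ℕ) (1:ℂ) : PolyRing n)
        • cls n Γ γ (hA hγA) ∈ W := Submodule.smul_mem _ _ hmem0
    rw [single_smul_cls _ _ _ h2] at hsm
    have hspan : cls n Γ (γ + natVec (Pi.single i 1)) h2 ∈
        Submodule.span ℂ (Set.range fun γ : A => cls n Γ γ.1 (hA γ.2)) := by
      have : cls n Γ (γ + natVec (Pi.single i 1)) h2 ∈ (W : Set (CGamma n Γ)) := hsm
      rw [hW] at this
      exact this
    have hrange : (Set.range fun a : A => cls n Γ a.1 (hA a.2))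
        = (fun x : Γ => cls n Γ x.1 x.2) '' {x : Γ | x.1 ∈ A} := by
      ext y
      constructor
      · rintro ⟨a, rfl⟩; exact ⟨⟨a.1, hA a.2⟩, a.2, rfl⟩
      · rintro ⟨x, hx, rfl⟩; exact ⟨⟨x.1, hx⟩, rfl⟩
    rw [hrange] at hspan
    have hnot : (⟨γ + natVec (Pi.single i 1), h2⟩ : Γ) ∉ {x : Γ | x.1 ∈ A} := by
      intro hmem
      refine hnA ?_
      have : γ + natVec (Pi.single i 1) ∈ A := hmem
      rwa [natVec_single] at this
    exact (cls_linearIndependent hdown).notMem_span_image hnot hspan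
  · intro hcl
    refine ⟨Submodule.span (PolyRing n) (Set.range fun γ : A => cls n Γ γ.1 (hA γ.2)), ?_, ?_⟩
    · exact (cls_linearIndependent hdown).comp (fun a : A => (⟨a.1, hA a.2⟩ : Γ))
        (fun a b hab => by apply Subtype.ext; have h2 := congrArg Subtype.val hab; exact h2)
    · have h1 : ∀ x : CGamma n Γ,
          x ∈ Submodule.span (PolyRing n) (Set.range fun γ : A => cls n Γ γ.1 (hA γ.2)) →
          x ∈ Submodule.span ℂ (Set.range fun γ : A => cls n Γ γ.1 (hA γ.2)) := by
        intro x hx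
        induction hx using Submodule.span_induction with
        | mem y hy => exact Submodule.subset_span hy
        | zero => exact Submodule.zero_mem _
        | add a b _ _ ha hb => exact Submodule.add_mem _ ha hb
        | smul f y _ hy => exact poly_smul_span_mem hdown hA hcl f hy
      have h2 : ∀ x : CGamma n Γ,
          x ∈ Submodule.span ℂ (Set.range fun γ : A => cls n Γ γ.1 (hA γ.2)) →
          x ∈ Submodule.span (PolyRing n) (Set.range fun γ : A => cls n Γ γ.1 (hA γ.2)) := by
        intro x hx
        induction hx using Submodule.span_induction with
        | mem y hy => exact Submodule.subset_span hy
        | zero => exact Submodule.zero_mem _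
        | add a b _ _ ha hb => exact Submodule.add_mem _ ha hb
        | smul c y _ hy =>
          rw [csmul_cgamma]
          exact Submodule.smul_mem _ _ hy
      ext x
      exact ⟨fun hx => h1 x hx, fun hx => h2 x hx⟩
end
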